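/- Let S = MC({S_i}_{i∈I}, K) be the multicomposition of a composable family {S_i}_{i∈I} with interfaces H = {h_i}_{i∈I} and connection policy K complying with a connection model CM, and let s = (q⃗, w⃗) be a reachable configuration of S. If for every i ∈ I the local state q_{h_i} of the gateway for h_i is not one of the fresh intermediate gateway states in Q̂_{h_i}, then the projection s|_K is a reachable configuration of the communicating system K. -/

import Mathlib

namespace CFSM

/-- Direction of a communication action: output (`!`) or input (`?`). -/
inductive Dir : Type where
  | out : Dir
  | inp : Dir
deriving DecidableEq

instance : Fintype Dir :=
  ⟨{Dir.out, Dir.inp}, fun x => by cases x <;> simp⟩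

/-- An action `pq!a` (output) or `pq?a` (input) over participants `P` and messages `A`:
`snd` is the sender `p`, `rcv` the receiver `q`, `msg` the message `a`. -/
structure Act (P : Type) (A : Type) : Type where
  snd : P
  rcv : P
  dir : Dir
  msg : A

instance {P A : Type} [Finite P] [Finite A] : Finite (Act P A) :=
  Finite.of_injective (fun l => (l.snd, l.rcv, l.dir, l.msg))
    (fun a b h => by
      cases a; cases b
      simp only [Prod.mk.injEq] at h
      obtain ⟨h1, h2, h3, h4⟩ := h
      subst h1; subst h2; subst h3; subst h4; rfl)

/-- The subject of an action: the sender of an output, the receiver of an input. -/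
def Act.subject {P A : Type} (l : Act P A) : P :=
  match l.dir with
  | .out => l.snd
  | .inp => l.rcv

/-- A communicating system over participants `P` and messages `A`:
one machine (state type, initial state and transition relation) per participant. -/
structure CS (P : Type) (A : Type) : Type 1 where
  St : P → Type
  init : ∀ p, St p
  delta : ∀ p, Set (St p × Act P A × St p)

/-- All actions of the machine of participant `p` have subject `p`
(the name of the machine) and distinct endpoints. -/
def CS.WellFormed {P A : Type} (S : CS P A) : Prop :=
  ∀ p t, t ∈ S.delta p → ((t.2.1 : Act P A).subject = p ∧ t.2.1.snd ≠ t.2.1.rcv)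

/-- A configuration: a local state for each machine and a FIFO buffer
for each ordered pair of participants. -/
structure Config {P A : Type} (S : CS P A) : Type where
  st : ∀ p, S.St p
  ch : P → P → List A

/-- The initial configuration: all machines in their initial state, all channels empty. -/
def CS.initConfig {P A : Type} (S : CS P A) : Config S :=
  ⟨S.init, fun _ _ => []⟩

/-- The labelled transition relation between configurations. -/
def StepL {P A : Type} (S : CS P A) (c : Config S) (l : Act P A) (c' : Config S) : Prop :=
  match l.dir with
  | .out =>
      (c.st l.snd, l, c'.st l.snd) ∈ S.delta l.snd ∧
      (∀ p, p ≠ l.snd → c'.st p = c.st p) ∧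
      c'.ch l.snd l.rcv = c.ch l.snd l.rcv ++ [l.msg] ∧
      (∀ p q, (p, q) ≠ (l.snd, l.rcv) → c'.ch p q = c.ch p q)
  | .inp =>
      (c.st l.rcv, l, c'.st l.rcv) ∈ S.delta l.rcv ∧
      (∀ p, p ≠ l.rcv → c'.st p = c.st p) ∧
      c.ch l.snd l.rcv = l.msg :: c'.ch l.snd l.rcv ∧
      (∀ p q, (p, q) ≠ (l.snd, l.rcv) → c'.ch p q = c.ch p q)

/-- Unlabelled transition relation. -/
def Step {P A : Type} (S : CS P A) (c c' : Config S) : Prop :=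
  ∃ l, StepL S c l c'

/-- Reachability between configurations. -/
def Reach {P A : Type} (S : CS P A) : Config S → Config S → Prop :=
  Relation.ReflTransGen (Step S)

/-- The set of configurations reachable from the initial configuration. -/
def RC {P A : Type} (S : CS P A) : Set (Config S) :=
  {c | Reach S S.initConfig c}

/-- A local state is final if it has no outgoing transition. -/
def FinalSt {Q P A : Type} (δ : Set (Q × Act P A × Q)) (q : Q) : Prop :=
  ∀ l q', (q, l, q') ∉ δ

/-- A local state is receiving if it is not final and all its outgoing
transitions are labelled with input actions. -/
def ReceivingSt {Q P A : Type} (δ : Set (Q × Act P A × Q)) (q : Q) : Prop :=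
  (∃ l q', (q, l, q') ∈ δ) ∧ ∀ l q', (q, l, q') ∈ δ → (l : Act P A).dir = Dir.inp

/-- A local state is mixed if it has at least one outgoing output-labelled
transition and at least one outgoing input-labelled transition. -/
def MixedSt {Q P A : Type} (δ : Set (Q × Act P A × Q)) (q : Q) : Prop :=
  (∃ l q', (q, l, q') ∈ δ ∧ (l : Act P A).dir = Dir.out) ∧
  (∃ l q', (q, l, q') ∈ δ ∧ (l : Act P A).dir = Dir.inp)

/-- A machine has no mixed states. -/
def NoMixed {Q P A : Type} (δ : Set (Q × Act P A × Q)) : Prop :=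
  ∀ q, ¬ MixedSt δ q

/-- Deadlock configuration: all channels empty but all machines in receiving states. -/
def DeadlockConfig {P A : Type} (S : CS P A) (c : Config S) : Prop :=
  (∀ p q, c.ch p q = []) ∧ ∀ p, ReceivingSt (S.delta p) (c.st p)

def DeadlockFree {P A : Type} (S : CS P A) : Prop :=
  ∀ c ∈ RC S, ¬ DeadlockConfig S c

/-- Orphan-message configuration: all machines final but some channel nonempty. -/
def OrphanConfig {P A : Type} (S : CS P A) (c : Config S) : Prop :=
  (∀ p, FinalSt (S.delta p) (c.st p)) ∧ ∃ p q, c.ch p q ≠ []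

def OrphanFree {P A : Type} (S : CS P A) : Prop :=
  ∀ c ∈ RC S, ¬ OrphanConfig S c

/-- Unspecified reception configuration: some machine `r` is in a receiving state and,
for every input transition of `r`, the corresponding channel is nonempty with a
first element different from the expected message. -/
def URConfig {P A : Type} (S : CS P A) (c : Config S) : Prop :=
  ∃ r, ReceivingSt (S.delta r) (c.st r) ∧
    ∀ s a q', (c.st r, Act.mk s r Dir.inp a, q') ∈ S.delta r →
      (c.ch s r ≠ [] ∧ ¬ ∃ w, c.ch s r = a :: w)

def ReceptionErrorFree {P A : Type} (S : CS P A) : Prop :=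
  ∀ c ∈ RC S, ¬ URConfig S c

/-- Progress: every reachable configuration has an outgoing transition or all
machines are in final states. -/
def ProgressProp {P A : Type} (S : CS P A) : Prop :=
  ∀ c ∈ RC S, (∃ c', Step S c c') ∨ ∀ p, FinalSt (S.delta p) (c.st p)

/-- `p`-lock configuration: `p` is in a receiving state and never occurs as the
subject of an action in any transition sequence from `c`. -/
def PLockConfig {P A : Type} (S : CS P A) (c : Config S) (p : P) : Prop :=
  ReceivingSt (S.delta p) (c.st p) ∧
  ∀ c1 l c2, Reach S c c1 → StepL S c1 l c2 → l.subject ≠ p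

def LockFree {P A : Type} (S : CS P A) : Prop :=
  ∀ c ∈ RC S, ∀ p, ¬ PLockConfig S c p

section Composition

variable {I : Type} {P : I → Type} {A : Type}

/-- Messages occurring in input actions of the machine of `p`. -/
def inMsgs {Pp A : Type} (S : CS Pp A) (p : Pp) : Set A :=
  {a | ∃ q s q', (q, Act.mk s p Dir.inp a, q') ∈ S.delta p}

/-- Messages occurring in output actions of the machine of `p`. -/
def outMsgs {Pp A : Type} (S : CS Pp A) (p : Pp) : Set A :=
  {a | ∃ q r q', (q, Act.mk p r Dir.out a, q') ∈ S.delta p}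

/-- `CM` is a connection model for the interfaces `hh i` of the family `S`
(the interface `h_i` is represented by its index `i`). -/
def IsConnModel (S : ∀ i, CS (P i) A) (hh : ∀ i, P i) (CM : Set (I × A × I)) : Prop :=
  ∀ i a,
    (a ∈ inMsgs (S i) (hh i) →
      ∃ j, j ≠ i ∧ a ∈ outMsgs (S j) (hh j) ∧ (i, a, j) ∈ CM) ∧
    (a ∈ outMsgs (S i) (hh i) →
      ∃ j, j ≠ i ∧ a ∈ inMsgs (S j) (hh j) ∧ (j, a, i) ∈ CM)

/-- `CM` is a strong connection model: additionally the connecting partner is unique. -/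
def IsStrongConnModel (S : ∀ i, CS (P i) A) (hh : ∀ i, P i) (CM : Set (I × A × I)) : Prop :=
  IsConnModel S hh CM ∧
  ∀ i a,
    (a ∈ inMsgs (S i) (hh i) → ∃! j, (i, a, j) ∈ CM) ∧
    (a ∈ outMsgs (S i) (hh i) → ∃! j, (j, a, i) ∈ CM)

/-- Conditions (*) and (**) for a candidate transition relation `d` of the local
connection policy of interface `hh i` (the name `k_i` is represented by `i`). -/
def PolicySat (S : ∀ i, CS (P i) A) (hh : ∀ i, P i) (CM : Set (I × A × I)) (i : I)
    (d : Set ((S i).St (hh i) × Act I A × (S i).St (hh i))) : Prop :=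
  (∀ q r a q', (q, Act.mk r (hh i) Dir.inp a, q') ∈ (S i).delta (hh i) →
      ∃ j, j ≠ i ∧ (i, a, j) ∈ CM ∧ (q, Act.mk i j Dir.out a, q') ∈ d) ∧
  (∀ q r a q', (q, Act.mk (hh i) r Dir.out a, q') ∈ (S i).delta (hh i) →
      ∃ j, j ≠ i ∧ (j, a, i) ∈ CM ∧ (q, Act.mk j i Dir.inp a, q') ∈ d)

/-- `d` belongs to the local connection policy set `IS(M_{h_i}, CM)`:
it is a minimal relation satisfying (*) and (**).  (The states `q̇` of the
policy machine are identified with the states `q` of `M_{h_i}`.) -/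
def InIS (S : ∀ i, CS (P i) A) (hh : ∀ i, P i) (CM : Set (I × A × I)) (i : I)
    (d : Set ((S i).St (hh i) × Act I A × (S i).St (hh i))) : Prop :=
  PolicySat S hh CM i d ∧ ∀ d', d' ⊆ d → PolicySat S hh CM i d' → d' = d

/-- The communicating system (over the participant type `I` of names `k_i`)
determined by the family of transition relations `Kd` of a connection policy. -/
def policyCS (S : ∀ i, CS (P i) A) (hh : ∀ i, P i)
    (Kd : ∀ i, Set ((S i).St (hh i) × Act I A × (S i).St (hh i))) : CS I A where
  St := fun i => (S i).St (hh i)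
  init := fun i => (S i).init (hh i)
  delta := Kd

/-- `Kd` is a connection policy for the interfaces `hh` complying with `CM`. -/
def IsConnPolicy (S : ∀ i, CS (P i) A) (hh : ∀ i, P i) (CM : Set (I × A × I))
    (Kd : ∀ i, Set ((S i).St (hh i) × Act I A × (S i).St (hh i))) : Prop :=
  ∀ i, InIS S hh CM i (Kd i)

/-- States of the gateway for interface `hh i`: the original states plus one
fresh state per transition of `M_{h_i}`. -/
abbrev GWState (S : ∀ i, CS (P i) A) (hh : ∀ i, P i) (i : I) : Type :=
  (S i).St (hh i) ⊕ ((S i).St (hh i) × Act (P i) A × (S i).St (hh i))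

/-- Lifting of a local action of system `i` to the composed participant type. -/
def liftAct (i : I) (l : Act (P i) A) : Act ((j : I) × P j) A :=
  Act.mk ⟨i, l.snd⟩ ⟨i, l.rcv⟩ l.dir l.msg

/-- Transition relation of the gateway `M_{h_i} ⟲ M_{k_i}`. -/
def GWdelta (S : ∀ i, CS (P i) A) (hh : ∀ i, P i)
    (Kd : ∀ i, Set ((S i).St (hh i) × Act I A × (S i).St (hh i))) (i : I) :
    Set (GWState S hh i × Act ((j : I) × P j) A × GWState S hh i) :=
  {x | ∃ q a q',
    (∃ s r, (q, Act.mk (hh i) s Dir.out a, q') ∈ (S i).delta (hh i) ∧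
        (q, Act.mk r i Dir.inp a, q') ∈ Kd i ∧
        (x = (Sum.inl q, Act.mk ⟨r, hh r⟩ ⟨i, hh i⟩ Dir.inp a,
              Sum.inr (q, Act.mk (hh i) s Dir.out a, q')) ∨
         x = (Sum.inr (q, Act.mk (hh i) s Dir.out a, q'),
              Act.mk ⟨i, hh i⟩ ⟨i, s⟩ Dir.out a, Sum.inl q'))) ∨
    (∃ s r, (q, Act.mk s (hh i) Dir.inp a, q') ∈ (S i).delta (hh i) ∧
        (q, Act.mk i r Dir.out a, q') ∈ Kd i ∧
        (x = (Sum.inl q, Act.mk ⟨i, s⟩ ⟨i, hh i⟩ Dir.inp a,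
              Sum.inr (q, Act.mk s (hh i) Dir.inp a, q')) ∨
         x = (Sum.inr (q, Act.mk s (hh i) Dir.inp a, q'),
              Act.mk ⟨i, hh i⟩ ⟨r, hh r⟩ Dir.out a, Sum.inl q')))}

open Classical in
/-- State type of the machine of participant `⟨i, p⟩` in the multicomposition:
the gateway state type if `p` is the interface of system `i`, the original
state type otherwise. -/
noncomputable def MCSt (S : ∀ i, CS (P i) A) (hh : ∀ i, P i) (x : (i : I) × P i) : Type :=
  if x.2 = hh x.1 then GWState S hh x.1 else (S x.1).St x.2

/-- The multicomposition `MC({S_i}, K)`: all machines of the single systems,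
with the machine of each interface `hh i` replaced by its gateway. -/
noncomputable def MC (S : ∀ i, CS (P i) A) (hh : ∀ i, P i)
    (Kd : ∀ i, Set ((S i).St (hh i) × Act I A × (S i).St (hh i))) :
    CS ((i : I) × P i) A where
  St := MCSt S hh
  init := fun x => by
    by_cases hp : x.2 = hh x.1
    · have h : MCSt S hh x = GWState S hh x.1 := by simp [MCSt, hp]
      rw [h]; exact Sum.inl ((S x.1).init (hh x.1))
    · have h : MCSt S hh x = (S x.1).St x.2 := by simp [MCSt, hp]
      rw [h]; exact (S x.1).init x.2
  delta := fun x => by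
    by_cases hp : x.2 = hh x.1
    · have h : MCSt S hh x = GWState S hh x.1 := by simp [MCSt, hp]
      rw [h]; exact GWdelta S hh Kd x.1
    · have h : MCSt S hh x = (S x.1).St x.2 := by simp [MCSt, hp]
      rw [h]
      exact {t | ∃ q l q', (q, l, q') ∈ (S x.1).delta x.2 ∧ t = (q, liftAct x.1 l, q')}

/-- The state of the gateway of interface `hh i` in a configuration of the
multicomposition, as an element of `GWState`. -/
noncomputable def toGW (S : ∀ i, CS (P i) A) (hh : ∀ i, P i) (i : I)
    (x : MCSt S hh ⟨i, hh i⟩) : GWState S hh i :=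
  cast (by simp [MCSt]) x

/-- The state of a non-interface participant in a configuration of the
multicomposition, as an element of its original state type. -/
noncomputable def toLoc (S : ∀ i, CS (P i) A) (hh : ∀ i, P i) {i : I} {p : P i}
    (hp : p ≠ hh i) (x : MCSt S hh ⟨i, p⟩) : (S i).St p :=
  cast (by simp [MCSt, hp]) x

/-- Projection of a configuration of the multicomposition to system `S i`,
assuming the gateway state of `hh i` is not a fresh intermediate state
(i.e. it is of the form `Sum.inl q`). -/
noncomputable def projSys (S : ∀ i, CS (P i) A) (hh : ∀ i, P i)
    (Kd : ∀ i, Set ((S i).St (hh i) × Act I A × (S i).St (hh i)))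
    (i : I) (s : Config (MC S hh Kd))
    (hq : ∃ q, toGW S hh i (s.st ⟨i, hh i⟩) = Sum.inl q) : Config (S i) where
  st := fun p => by
    by_cases hp : p = hh i
    · rw [hp]; exact hq.choose
    · exact toLoc S hh hp (s.st ⟨i, p⟩)
  ch := fun p q => s.ch ⟨i, p⟩ ⟨i, q⟩

/-- Projection of a configuration of the multicomposition to the connection
policy `K`, assuming no gateway is in a fresh intermediate state. -/
noncomputable def projPolicy (S : ∀ i, CS (P i) A) (hh : ∀ i, P i)
    (Kd : ∀ i, Set ((S i).St (hh i) × Act I A × (S i).St (hh i)))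
    (s : Config (MC S hh Kd))
    (hq : ∀ i, ∃ q, toGW S hh i (s.st ⟨i, hh i⟩) = Sum.inl q) :
    Config (policyCS S hh Kd) where
  st := fun i => (hq i).choose
  ch := fun i j => s.ch ⟨i, hh i⟩ ⟨j, hh j⟩

end Composition

end CFSM
/-! Auxiliary simulation machinery -/
namespace CFSM
section Composition
variable {I : Type} {P : I → Type} {A : Type}

lemma mem_cast_triple {α β L : Type} (e : α = β)
    (pf : Set (α × L × α) = Set (β × L × β)) (s : Set (α × L × α)) (x y : β) (l : L) :
    (x, l, y) ∈ cast pf s ↔ (cast e.symm x, l, cast e.symm y) ∈ s := by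
  subst e; simp

lemma Config.ext' {Pp A : Type} {S : CS Pp A} {c c' : Config S}
    (h1 : c.st = c'.st) (h2 : c.ch = c'.ch) : c = c' := by
  cases c; cases c'; cases h1; cases h2; rfl

variable (S : ∀ i, CS (P i) A) (hh : ∀ i, P i)
  (Kd : ∀ i, Set ((S i).St (hh i) × Act I A × (S i).St (hh i)))

lemma toGW_init' (i : I) :
    toGW S hh i ((MC S hh Kd).init ⟨i, hh i⟩) = Sum.inl ((S i).init (hh i)) := by
  simp [MC, MCSt, toGW]
  exact cast_cast _ _ _

lemma mem_delta_if (i : I) (a b : MCSt S hh ⟨i, hh i⟩) (l : Act ((j : I) × P j) A) :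
    ((a, l, b) ∈ (MC S hh Kd).delta ⟨i, hh i⟩) ↔
      (toGW S hh i a, l, toGW S hh i b) ∈ GWdelta S hh Kd i := by
  simp only [MC, MCSt, toGW, dite_true, eq_mpr_eq_cast]
  exact mem_cast_triple (show GWState S hh i = MCSt S hh ⟨i, hh i⟩ by simp [MCSt]) _ _ _ _ _

/-- The state of the policy machine `k_i` corresponding to a gateway state. -/
def Gmap (i : I) : GWState S hh i → (S i).St (hh i)
  | Sum.inl q => q
  | Sum.inr (q, l, q') => match l.dir with | Dir.out => q' | Dir.inp => q

/-- Map a configuration of the multicomposition to a configuration of the policy. -/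
noncomputable def Fcfg (c : Config (MC S hh Kd)) : Config (policyCS S hh Kd) where
  st := fun i => Gmap S hh i (toGW S hh i (c.st ⟨i, hh i⟩))
  ch := fun i j => c.ch ⟨i, hh i⟩ ⟨j, hh j⟩

lemma Fcfg_init : Fcfg S hh Kd (MC S hh Kd).initConfig = (policyCS S hh Kd).initConfig := by
  refine Config.ext' (funext fun i => ?_) rfl
  show Gmap S hh i (toGW S hh i ((MC S hh Kd).init ⟨i, hh i⟩)) = (S i).init (hh i)
  rw [toGW_init']
  rfl

lemma sigma_pair_ne {i j : I} {p : P i} (hp : p ≠ hh i) :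
    (⟨i, p⟩ : (j : I) × P j) ≠ ⟨j, hh j⟩ := by
  intro h
  have h1 : i = j := congrArg Sigma.fst h
  subst h1
  apply hp
  simpa using h

lemma step_sim (hwf : ∀ i, (S i).WellFormed) {c c' : Config (MC S hh Kd)}
    (h : Step (MC S hh Kd) c c') :
    Reach (policyCS S hh Kd) (Fcfg S hh Kd c) (Fcfg S hh Kd c') := by
  obtain ⟨⟨x, y, d, a⟩, hl⟩ := h
  cases d
  case out =>
    obtain ⟨hδ, hst, hch1, hch2⟩ := hl
    obtain ⟨i, p⟩ := x
    by_cases hp : p = hh i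
    · subst hp
      replace hδ := (mem_delta_if S hh Kd i _ _ _).1 hδ
      obtain ⟨q, a0, q', hcase⟩ := hδ
      rcases hcase with ⟨s0, r, hmem, hKd, heq | heq⟩ | ⟨s0, r, hmem, hKd, heq | heq⟩
      · simp only [Prod.mk.injEq, Act.mk.injEq, reduceCtorEq, false_and, and_false] at heq
      · -- type1 second half: silent
        simp only [Prod.mk.injEq, Act.mk.injEq, true_and] at heq
        obtain ⟨h1, ⟨hy, ha⟩, h2⟩ := heq
        subst hy; subst ha
        have hne : hh i ≠ s0 := (hwf i (hh i) _ hmem).2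
        have he : Fcfg S hh Kd c' = Fcfg S hh Kd c := by
          refine Config.ext' (funext fun j => ?_) (funext fun j1 => funext fun j2 => ?_)
          · show Gmap S hh j (toGW S hh j (c'.st ⟨j, hh j⟩)) =
              Gmap S hh j (toGW S hh j (c.st ⟨j, hh j⟩))
            by_cases hj : j = i
            · subst hj
              rw [h1, h2]
              rfl
            · rw [hst _ (fun hcon => hj (congrArg Sigma.fst hcon))]
          · show c'.ch ⟨j1, hh j1⟩ ⟨j2, hh j2⟩ = c.ch ⟨j1, hh j1⟩ ⟨j2, hh j2⟩
            refine hch2 _ _ (fun hcon => ?_)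
            have h3 : (⟨j2, hh j2⟩ : (j : I) × P j) = ⟨i, s0⟩ := congrArg Prod.snd hcon
            exact sigma_pair_ne hh (Ne.symm hne) h3.symm
        rw [he]
        exact Relation.ReflTransGen.refl
      · simp only [Prod.mk.injEq, Act.mk.injEq, reduceCtorEq, false_and, and_false] at heq
      · -- type2 second half: K output step
        simp only [Prod.mk.injEq, Act.mk.injEq, true_and] at heq
        obtain ⟨h1, ⟨hy, ha⟩, h2⟩ := heq
        subst hy; subst ha
        refine Relation.ReflTransGen.single ⟨Act.mk i r Dir.out a, ?_, ?_, ?_, ?_⟩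
        · show (Gmap S hh i (toGW S hh i (c.st ⟨i, hh i⟩)), _,
              Gmap S hh i (toGW S hh i (c'.st ⟨i, hh i⟩))) ∈ Kd i
          rw [h1, h2]
          exact hKd
        · intro j hj
          show Gmap S hh j (toGW S hh j (c'.st ⟨j, hh j⟩)) =
            Gmap S hh j (toGW S hh j (c.st ⟨j, hh j⟩))
          rw [hst _ (fun hcon => hj (congrArg Sigma.fst hcon))]
        · exact hch1
        · intro p q hne
          refine hch2 _ _ (fun hcon => hne ?_)
          have e1 : p = i := congrArg Sigma.fst (congrArg Prod.fst hcon)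
          have e2 : q = r := congrArg Sigma.fst (congrArg Prod.snd hcon)
          rw [e1, e2]
    · -- non-interface output: silent
      have he : Fcfg S hh Kd c' = Fcfg S hh Kd c := by
        refine Config.ext' (funext fun j => ?_) (funext fun j1 => funext fun j2 => ?_)
        · show Gmap S hh j (toGW S hh j (c'.st ⟨j, hh j⟩)) =
            Gmap S hh j (toGW S hh j (c.st ⟨j, hh j⟩))
          rw [hst _ (Ne.symm (sigma_pair_ne hh hp))]
        · show c'.ch ⟨j1, hh j1⟩ ⟨j2, hh j2⟩ = c.ch ⟨j1, hh j1⟩ ⟨j2, hh j2⟩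
          refine hch2 _ _ (fun hcon => ?_)
          exact sigma_pair_ne hh hp (congrArg Prod.fst hcon).symm
      rw [he]
      exact Relation.ReflTransGen.refl
  case inp =>
    obtain ⟨hδ, hst, hch1, hch2⟩ := hl
    obtain ⟨i, p⟩ := y
    by_cases hp : p = hh i
    · subst hp
      replace hδ := (mem_delta_if S hh Kd i _ _ _).1 hδ
      obtain ⟨q, a0, q', hcase⟩ := hδ
      rcases hcase with ⟨s0, r, hmem, hKd, heq | heq⟩ | ⟨s0, r, hmem, hKd, heq | heq⟩
      · -- type1 first half: K input step
        simp only [Prod.mk.injEq, Act.mk.injEq, true_and] at heq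
        obtain ⟨h1, ⟨hx, ha⟩, h2⟩ := heq
        subst hx; subst ha
        refine Relation.ReflTransGen.single ⟨Act.mk r i Dir.inp a, ?_, ?_, ?_, ?_⟩
        · show (Gmap S hh i (toGW S hh i (c.st ⟨i, hh i⟩)), _,
              Gmap S hh i (toGW S hh i (c'.st ⟨i, hh i⟩))) ∈ Kd i
          rw [h1, h2]
          exact hKd
        · intro j hj
          show Gmap S hh j (toGW S hh j (c'.st ⟨j, hh j⟩)) =
            Gmap S hh j (toGW S hh j (c.st ⟨j, hh j⟩))
          rw [hst _ (fun hcon => hj (congrArg Sigma.fst hcon))]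
        · exact hch1
        · intro p q hne
          refine hch2 _ _ (fun hcon => hne ?_)
          have e1 : p = r := congrArg Sigma.fst (congrArg Prod.fst hcon)
          have e2 : q = i := congrArg Sigma.fst (congrArg Prod.snd hcon)
          rw [e1, e2]
      · simp only [Prod.mk.injEq, Act.mk.injEq, reduceCtorEq, false_and, and_false] at heq
      · -- type2 first half: silent
        simp only [Prod.mk.injEq, Act.mk.injEq, true_and] at heq
        obtain ⟨h1, ⟨hx, ha⟩, h2⟩ := heq
        subst hx; subst ha
        have hne : s0 ≠ hh i := (hwf i (hh i) _ hmem).2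
        have he : Fcfg S hh Kd c' = Fcfg S hh Kd c := by
          refine Config.ext' (funext fun j => ?_) (funext fun j1 => funext fun j2 => ?_)
          · show Gmap S hh j (toGW S hh j (c'.st ⟨j, hh j⟩)) =
              Gmap S hh j (toGW S hh j (c.st ⟨j, hh j⟩))
            by_cases hj : j = i
            · subst hj
              rw [h1, h2]
              rfl
            · rw [hst _ (fun hcon => hj (congrArg Sigma.fst hcon))]
          · show c'.ch ⟨j1, hh j1⟩ ⟨j2, hh j2⟩ = c.ch ⟨j1, hh j1⟩ ⟨j2, hh j2⟩
            refine hch2 _ _ (fun hcon => ?_)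
            exact sigma_pair_ne hh hne (congrArg Prod.fst hcon).symm
        rw [he]
        exact Relation.ReflTransGen.refl
      · simp only [Prod.mk.injEq, Act.mk.injEq, reduceCtorEq, false_and, and_false] at heq
    · -- non-interface input: silent
      have he : Fcfg S hh Kd c' = Fcfg S hh Kd c := by
        refine Config.ext' (funext fun j => ?_) (funext fun j1 => funext fun j2 => ?_)
        · show Gmap S hh j (toGW S hh j (c'.st ⟨j, hh j⟩)) =
            Gmap S hh j (toGW S hh j (c.st ⟨j, hh j⟩))
          rw [hst _ (Ne.symm (sigma_pair_ne hh hp))]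
        · show c'.ch ⟨j1, hh j1⟩ ⟨j2, hh j2⟩ = c.ch ⟨j1, hh j1⟩ ⟨j2, hh j2⟩
          refine hch2 _ _ (fun hcon => ?_)
          exact sigma_pair_ne hh hp (congrArg Prod.snd hcon).symm
      rw [he]
      exact Relation.ReflTransGen.refl

lemma reach_sim (hwf : ∀ i, (S i).WellFormed) {c c' : Config (MC S hh Kd)}
    (h : Reach (MC S hh Kd) c c') :
    Reach (policyCS S hh Kd) (Fcfg S hh Kd c) (Fcfg S hh Kd c') := by
  induction h with
  | refl => exact Relation.ReflTransGen.refl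
  | tail _ h2 ih => exact ih.trans (step_sim S hh Kd hwf h2)

end Composition
end CFSM

open CFSM in
/-- if in a reachable configuration of the multicomposition no gateway is
in a fresh intermediate state, then the projection to the connection policy `K` is
reachable in `K`. -/
theorem projPolicy_reachable
    {I : Type} [Finite I] {P : I → Type} [∀ i, Finite (P i)] {A : Type} [Finite A]
    (S : ∀ i, CS (P i) A)
    (hfin : ∀ i p, Finite ((S i).St p))
    (hwf : ∀ i, (S i).WellFormed)
    (hh : ∀ i, P i)
    (CM : Set (I × A × I)) (hCM : IsConnModel S hh CM)
    (Kd : ∀ i, Set ((S i).St (hh i) × Act I A × (S i).St (hh i)))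
    (hK : IsConnPolicy S hh CM Kd)
    (s : Config (MC S hh Kd)) (hs : s ∈ RC (MC S hh Kd))
    (hq : ∀ i, ∃ q, toGW S hh i (s.st ⟨i, hh i⟩) = Sum.inl q) :
    projPolicy S hh Kd s hq ∈ RC (policyCS S hh Kd) := by
  have hproj : projPolicy S hh Kd s hq = Fcfg S hh Kd s := by
    refine Config.ext' (funext fun i => ?_) rfl
    show (hq i).choose = Gmap S hh i (toGW S hh i (s.st ⟨i, hh i⟩))
    exact (congrArg (Gmap S hh i) (hq i).choose_spec).symm
  rw [hproj]
  have := reach_sim S hh Kd hwf hs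
  rwa [Fcfg_init S hh Kd] at this
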